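/- Suppose n keys are inserted in a linear probing hash table of size r with probe sequence start positions i_1,...,i_n, and I_1,...,I_ℓ are intervals modulo r such that the multiset {i_1,...,i_n} equals the multiset union of the I_j (each interval contributing each of its positions once). Then the total number of insertion steps is at least Σ_{1 ≤ j_1 < j_2 ≤ ℓ} |I_{j_1} ∩ I_{j_2}|^2 / 2. -/

import Mathlib

/-- A cyclic interval modulo `r` of length `b` starting at `a`. -/
def cycInterval (r : ℕ) (a : ZMod r) (b : ℕ) : Finset (ZMod r) :=
  (Finset.range b).image (fun (t : ℕ) => a + (t : ZMod r))

section helpers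
set_option linter.unusedSectionVars false
set_option maxHeartbeats 1000000
variable {r : ℕ} [NeZero r]

private lemma mod_two_cases (r a : ℕ) (h : a < 2 * r) :
    a % r = a ∨ (r ≤ a ∧ a % r = a - r) := by
  rcases Nat.lt_or_ge a r with h1 | h1
  · exact Or.inl (Nat.mod_eq_of_lt h1)
  · right
    refine ⟨h1, ?_⟩
    rw [Nat.mod_eq_sub_mod h1, Nat.mod_eq_of_lt (by omega)]

private lemma val_sub_cases (x y : ZMod r) :
    (x - y).val = if y.val ≤ x.val then x.val - y.val else r + x.val - y.val := by
  have hx : x = y + (x - y) := by ring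
  have h1 : x.val = (y.val + (x - y).val) % r := by
    conv_lhs => rw [hx]
    exact ZMod.val_add _ _
  have h2 := ZMod.val_lt x
  have h3 := ZMod.val_lt y
  have h4 := ZMod.val_lt (x - y)
  rcases mod_two_cases r (y.val + (x - y).val) (by omega) with h5 | h5 <;> split <;> omega

private lemma mem_cycInterval {a q : ZMod r} {b : ℕ} (hb : b ≤ r) :
    q ∈ cycInterval r a b ↔ (q - a).val < b := by
  constructor
  · rintro hq
    rw [cycInterval, Finset.mem_image] at hq
    obtain ⟨t, ht, rfl⟩ := hq
    rw [Finset.mem_range] at ht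
    have : a + (t : ZMod r) - a = (t : ZMod r) := by ring
    rw [this, ZMod.val_natCast, Nat.mod_eq_of_lt (by omega)]
    exact ht
  · intro h
    rw [cycInterval, Finset.mem_image]
    refine ⟨(q - a).val, Finset.mem_range.mpr h, ?_⟩
    rw [ZMod.natCast_zmod_val]
    ring

private lemma card_cycInterval {a : ZMod r} {b : ℕ} (hb : b ≤ r) :
    (cycInterval r a b).card = b := by
  rw [cycInterval, Finset.card_image_of_injOn, Finset.card_range]
  intro s hs t ht hst
  simp only [Finset.coe_range, Set.mem_Iio] at hs ht
  have : ((s : ZMod r)) = (t : ZMod r) := by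
    have := add_left_cancel hst
    exact this
  have h2 : s % r = t % r := by
    have := congrArg ZMod.val this
    rwa [ZMod.val_natCast, ZMod.val_natCast] at this
  rw [Nat.mod_eq_of_lt (by omega), Nat.mod_eq_of_lt (by omega)] at h2
  exact h2

private lemma arc_inter (a1 a2 : ZMod r) (b1 b2 : ℕ) (h : b1 + b2 ≤ r) :
    ∃ (s0 : ZMod r) (m : ℕ), m ≤ min b1 b2 ∧
      cycInterval r a1 b1 ∩ cycInterval r a2 b2 = cycInterval r s0 m := by
  have hb1 : b1 ≤ r := by omega
  have hb2 : b2 ≤ r := by omega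
  have hmem : ∀ (q : ZMod r), q ∈ cycInterval r a1 b1 ∩ cycInterval r a2 b2 ↔
      ((q - a1).val < b1 ∧ (q - a2).val < b2) := by
    intro q
    rw [Finset.mem_inter, mem_cycInterval hb1, mem_cycInterval hb2]
  set δ := (a2 - a1).val with hδ
  set δ' := (a1 - a2).val with hδ'
  have hδlt : δ < r := ZMod.val_lt _
  have hδ'lt : δ' < r := ZMod.val_lt _
  have hrel : ∀ q : ZMod r, (q - a1).val = ((q - a2).val + δ) % r := by
    intro q
    have : q - a1 = (q - a2) + (a2 - a1) := by ring
    rw [this, ZMod.val_add]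
  have hrel' : ∀ q : ZMod r, (q - a2).val = ((q - a1).val + δ') % r := by
    intro q
    have : q - a2 = (q - a1) + (a1 - a2) := by ring
    rw [this, ZMod.val_add]
  rcases Nat.lt_or_ge δ b1 with hc1 | hc1
  · refine ⟨a2, min b2 (b1 - δ), by omega, ?_⟩
    ext q
    rw [hmem, mem_cycInterval (by omega)]
    have h1 := hrel q
    have h2 := ZMod.val_lt (q - a2)
    have h3 := ZMod.val_lt (q - a1)
    rcases mod_two_cases r ((q - a2).val + δ) (by omega) with h5 | h5 <;> omega
  rcases Nat.lt_or_ge δ' b2 with hc2 | hc2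
  · refine ⟨a1, min b1 (b2 - δ'), by omega, ?_⟩
    ext q
    rw [hmem, mem_cycInterval (by omega)]
    have h1 := hrel' q
    have h2 := ZMod.val_lt (q - a2)
    have h3 := ZMod.val_lt (q - a1)
    rcases mod_two_cases r ((q - a1).val + δ') (by omega) with h5 | h5 <;> omega
  · refine ⟨a1, 0, by omega, ?_⟩
    ext q
    rw [hmem]
    simp only [cycInterval, Finset.range_zero, Finset.image_empty, Finset.notMem_empty,
      iff_false, not_and]
    intro h1 h2
    have e1 := hrel q
    have e2 := hrel' q
    have v2 := ZMod.val_lt (q - a2)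
    have v1 := ZMod.val_lt (q - a1)
    rcases mod_two_cases r ((q - a2).val + δ) (by omega) with h5 | h5 <;>
      rcases mod_two_cases r ((q - a1).val + δ') (by omega) with h6 | h6 <;> omega

private lemma c1 (px py q q' : ZMod r) (h1 : (px - q).val < (py - q).val)
    (h2 : (py - q').val < (px - q').val) : (px - q).val < (q' - q).val := by
  have e1 : px - q' = (px - q) - (q' - q) := by ring
  have e2 : py - q' = (py - q) - (q' - q) := by ring
  rw [e1, e2, val_sub_cases (px - q) (q' - q), val_sub_cases (py - q) (q' - q)] at h2
  have v1 := ZMod.val_lt (px - q)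
  have v2 := ZMod.val_lt (py - q)
  have v3 := ZMod.val_lt (q' - q)
  split_ifs at h2 <;> omega

private lemma c2 (z q q' s0 : ZMod r) (h : (z - q).val < (q' - q).val)
    (hqq' : (q - s0).val < (q' - s0).val) :
    (q - s0).val ≤ (z - s0).val ∧ (z - s0).val < (q' - s0).val := by
  have e1 : z - q = (z - s0) - (q - s0) := by ring
  have e2 : q' - q = (q' - s0) - (q - s0) := by ring
  rw [e1, e2, val_sub_cases (z - s0) (q - s0), val_sub_cases (q' - s0) (q - s0)] at h
  have v1 := ZMod.val_lt (z - s0)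
  have v2 := ZMod.val_lt (q - s0)
  have v3 := ZMod.val_lt (q' - s0)
  split_ifs at h <;> omega

private lemma val_sub_inj {x y q : ZMod r} (h : (x - q).val = (y - q).val) : x = y := by
  have h2 : x - q = y - q := ZMod.val_injective r h
  have h3 := congrArg (· + q) h2
  simpa using h3

private lemma perPair {n ℓ : ℕ}
    (pos ii : Fin n → ZMod r) (off : Fin n → ℕ)
    (hposInj : Function.Injective pos)
    (hoff : ∀ j, pos j = ii j + (off j : ZMod r))
    (fam : Fin n → Fin ℓ) (α β : Fin ℓ) (hαβ : α ≠ β)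
    (s0 : ZMod r) (m : ℕ) (hm : m ≤ r)
    (ak bk : ZMod r → Fin n)
    (ha : ∀ q ∈ cycInterval r s0 m, fam (ak q) = α ∧ ii (ak q) = q)
    (hb : ∀ q ∈ cycInterval r s0 m, fam (bk q) = β ∧ ii (bk q) = q) :
    m ^ 2 ≤ 2 * (Finset.univ.filter (fun w : Fin n × Fin n =>
        (pos w.2 - ii w.1).val < off w.1 ∧
        ((fam w.1 = α ∧ fam w.2 = β) ∨ (fam w.1 = β ∧ fam w.2 = α)))).card := by
  classical
  set S := cycInterval r s0 m with hS
  -- each key's own displacement bounds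
  have hoffge : ∀ x : Fin n, (pos x - ii x).val ≤ off x := by
    intro x
    rw [hoff x]
    have h : ii x + (off x : ZMod r) - ii x = ((off x : ℕ) : ZMod r) := by ring
    rw [h, ZMod.val_natCast]
    exact Nat.mod_le _ _
  have hkne : ∀ q ∈ S, ∀ q' ∈ S, ak q ≠ bk q' := by
    intro q hq q' hq' h
    exact hαβ (by rw [← (ha q hq).1, h, (hb q' hq').1])
  have hposne : ∀ q ∈ S, ∀ q' ∈ S, pos (ak q) ≠ pos (bk q') := by
    intro q hq q' hq' h
    exact hkne q hq q' hq' (hposInj h)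
  -- the diagonal is always good
  have hdiag : ∀ q ∈ S, ((pos (bk q) - ii (ak q)).val < off (ak q)) ∨
      ((pos (ak q) - ii (bk q)).val < off (bk q)) := by
    intro q hq
    have h1 := hoffge (ak q)
    have h2 := hoffge (bk q)
    rw [(ha q hq).2] at h1 ⊢
    rw [(hb q hq).2] at h2 ⊢
    have hne : (pos (ak q) - q).val ≠ (pos (bk q) - q).val :=
      fun h => hposne q hq q hq (val_sub_inj h)
    omega
  set Pass := Finset.univ.filter (fun w : Fin n × Fin n =>
        (pos w.2 - ii w.1).val < off w.1 ∧
        ((fam w.1 = α ∧ fam w.2 = β) ∨ (fam w.1 = β ∧ fam w.2 = α))) with hPass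
  set GP : Fin n × Fin n → Prop := fun w => (pos w.2 - ii w.1).val < off w.1 with hGP
  set Bad := (S ×ˢ S).filter (fun p => ¬(GP (ak p.1, bk p.2) ∨ GP (bk p.2, ak p.1))) with hBad
  set Good := (S ×ˢ S).filter (fun p => (GP (ak p.1, bk p.2) ∨ GP (bk p.2, ak p.1))) with hGood
  have hGB : Good.card + Bad.card = m * m := by
    rw [hGood, hBad, Finset.card_filter_add_card_filter_not, Finset.card_product,
      hS, card_cycInterval hm]
  have hσm : ∀ q ∈ S, (q - s0).val < m := fun q hq => (mem_cycInterval hm).mp hq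
  -- structure of bad pairs
  have hBadfacts : ∀ p ∈ Bad, p.1 ∈ S ∧ p.2 ∈ S ∧
      (pos (ak p.1) - p.1).val < (p.2 - p.1).val ∧
      (pos (bk p.2) - p.2).val < (p.1 - p.2).val := by
    rintro ⟨q, q'⟩ hp
    rw [hBad, Finset.mem_filter, Finset.mem_product] at hp
    obtain ⟨⟨hq, hq'⟩, hnp⟩ := hp
    rw [not_or] at hnp
    obtain ⟨hnp1, hnp2⟩ := hnp
    rw [hGP] at hnp1 hnp2
    simp only [not_lt] at hnp1 hnp2
    rw [(ha q hq).2] at hnp1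
    rw [(hb q' hq').2] at hnp2
    have h1 := hoffge (ak q); rw [(ha q hq).2] at h1
    have h2 := hoffge (bk q'); rw [(hb q' hq').2] at h2
    have hne : (pos (ak q) - q).val ≠ (pos (bk q') - q).val :=
      fun h => hposne q hq q' hq' (val_sub_inj h)
    have hne' : (pos (bk q') - q').val ≠ (pos (ak q) - q').val :=
      fun h => hposne q hq q' hq' (val_sub_inj h).symm
    have hA1 : (pos (ak q) - q).val < (pos (bk q') - q).val := by omega
    have hA2 : (pos (bk q') - q').val < (pos (ak q) - q').val := by omega
    exact ⟨hq, hq', c1 _ _ _ _ hA1 hA2, c1 _ _ _ _ hA2 hA1⟩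
  -- bad pairs are off-diagonal
  have hBadne : ∀ p ∈ Bad, p.1 ≠ p.2 := by
    rintro ⟨q, q'⟩ hp h
    simp only at h
    subst h
    rw [hBad, Finset.mem_filter, Finset.mem_product] at hp
    exact hp.2 (hdiag q hp.1.1)
  -- injection from Bad into the triangle T
  set T := (Finset.range m ×ˢ Finset.range m).filter (fun p => p.1 < p.2) with hT
  have hBadT : Bad.card ≤ T.card := by
    apply Finset.card_le_card_of_injOn
      (fun p => if (p.1 - s0).val < (p.2 - s0).val
        then ((pos (ak p.1) - s0).val, (p.2 - s0).val)
        else ((pos (bk p.2) - s0).val, (p.1 - s0).val))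
    · rintro ⟨q, q'⟩ hp
      dsimp only
      obtain ⟨hq, hq', hB1, hB2⟩ := hBadfacts _ hp
      dsimp only at hq hq' hB1 hB2
      have hne : q ≠ q' := hBadne _ hp
      have hσne : (q - s0).val ≠ (q' - s0).val := fun h => hne (val_sub_inj h)
      have hqm := hσm q hq
      have hq'm := hσm q' hq'
      rw [hT, Finset.mem_coe, Finset.mem_filter, Finset.mem_product, Finset.mem_range, Finset.mem_range]
      by_cases hlt : (q - s0).val < (q' - s0).val
      · rw [if_pos hlt]
        obtain ⟨h1, h2⟩ := c2 (pos (ak q)) q q' s0 hB1 hlt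
        exact ⟨⟨by omega, by omega⟩, by omega⟩
      · rw [if_neg hlt]
        have hlt' : (q' - s0).val < (q - s0).val := by omega
        obtain ⟨h1, h2⟩ := c2 (pos (bk q')) q' q s0 hB2 hlt'
        exact ⟨⟨by omega, by omega⟩, by omega⟩
    · rintro ⟨q1, q1'⟩ hp1 ⟨q2, q2'⟩ hp2 heq
      rw [Finset.mem_coe] at hp1 hp2
      obtain ⟨hq1, hq1', _, _⟩ := hBadfacts _ hp1
      obtain ⟨hq2, hq2', _, _⟩ := hBadfacts _ hp2
      dsimp only at hq1 hq1' hq2 hq2'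
      simp only at heq
      by_cases c1' : (q1 - s0).val < (q1' - s0).val <;>
        by_cases c2' : (q2 - s0).val < (q2' - s0).val
      · rw [if_pos c1', if_pos c2', Prod.mk.injEq] at heq
        obtain ⟨e1, e2⟩ := heq
        have h2 : q1' = q2' := val_sub_inj e2
        have h1 : ak q1 = ak q2 := hposInj (val_sub_inj e1)
        have h1' : q1 = q2 := by
          rw [← (ha q1 hq1).2, ← (ha q2 hq2).2, h1]
        rw [h1', h2]
      · rw [if_pos c1', if_neg c2', Prod.mk.injEq] at heq
        obtain ⟨e1, _⟩ := heq
        have h1 : ak q1 = bk q2' := hposInj (val_sub_inj e1)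
        exact absurd (by rw [← (ha q1 hq1).1, h1, (hb q2' hq2').1]) hαβ
      · rw [if_neg c1', if_pos c2', Prod.mk.injEq] at heq
        obtain ⟨e1, _⟩ := heq
        have h1 : bk q1' = ak q2 := hposInj (val_sub_inj e1)
        exact absurd (by rw [← (ha q2 hq2).1, ← h1, (hb q1' hq1').1]) hαβ
      · rw [if_neg c1', if_neg c2', Prod.mk.injEq] at heq
        obtain ⟨e1, e2⟩ := heq
        have h2 : q1 = q2 := val_sub_inj e2
        have h1 : bk q1' = bk q2' := hposInj (val_sub_inj e1)
        have h1' : q1' = q2' := by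
          rw [← (hb q1' hq1').2, ← (hb q2' hq2').2, h1]
        rw [h1', h2]
  -- the triangle has at most m*m/2 elements
  have hTswap : T.card =
      ((Finset.range m ×ˢ Finset.range m).filter (fun p => p.2 < p.1)).card := by
    apply Finset.card_bij (fun p _ => (p.2, p.1))
    · rintro ⟨x, y⟩ hxy
      simp only [hT, Finset.mem_filter, Finset.mem_product, Finset.mem_range] at hxy ⊢
      exact ⟨⟨hxy.1.2, hxy.1.1⟩, hxy.2⟩
    · rintro ⟨x1, y1⟩ _ ⟨x2, y2⟩ _ heq
      simp only [Prod.mk.injEq] at heq ⊢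
      exact ⟨heq.2, heq.1⟩
    · rintro ⟨x, y⟩ hxy
      simp only [hT, Finset.mem_filter, Finset.mem_product, Finset.mem_range] at hxy ⊢
      exact ⟨(y, x), ⟨⟨hxy.1.2, hxy.1.1⟩, hxy.2⟩, rfl⟩
  have hT2 : 2 * T.card ≤ m * m := by
    have hsub : ((Finset.range m ×ˢ Finset.range m).filter (fun p => p.2 < p.1)) ⊆
        ((Finset.range m ×ˢ Finset.range m).filter (fun p => ¬ p.1 < p.2)) := by
      intro p hp
      rw [Finset.mem_filter] at hp ⊢
      exact ⟨hp.1, by omega⟩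
    have h1 := Finset.card_filter_add_card_filter_not
      (s := Finset.range m ×ˢ Finset.range m) (p := fun p => p.1 < p.2)
    have h2 := Finset.card_le_card hsub
    have h3 : (Finset.range m ×ˢ Finset.range m).card = m * m := by
      rw [Finset.card_product, Finset.card_range]
    rw [← hT] at h1
    omega
  -- injection from Good into Pass
  have hGoodPass : Good.card ≤ Pass.card := by
    apply Finset.card_le_card_of_injOn
      (fun p => if (pos (bk p.2) - ii (ak p.1)).val < off (ak p.1)
        then (ak p.1, bk p.2) else (bk p.2, ak p.1))
    · rintro ⟨q, q'⟩ hp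
      rw [hGood, Finset.mem_coe, Finset.mem_filter, Finset.mem_product] at hp
      obtain ⟨⟨hq, hq'⟩, hdisj⟩ := hp
      rw [hPass, Finset.mem_coe, Finset.mem_filter]
      beta_reduce
      by_cases hc : (pos (bk q') - ii (ak q)).val < off (ak q)
      · rw [if_pos hc]
        exact ⟨Finset.mem_univ _, hc, Or.inl ⟨(ha q hq).1, (hb q' hq').1⟩⟩
      · rw [if_neg hc]
        have : (pos (ak q) - ii (bk q')).val < off (bk q') := by
          rcases hdisj with h | h
          · exact absurd h hc
          · exact h
        exact ⟨Finset.mem_univ _, this, Or.inr ⟨(hb q' hq').1, (ha q hq).1⟩⟩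
    · rintro ⟨q1, q1'⟩ hp1 ⟨q2, q2'⟩ hp2 heq
      rw [Finset.mem_coe, hGood, Finset.mem_filter, Finset.mem_product] at hp1 hp2
      obtain ⟨⟨hq1, hq1'⟩, _⟩ := hp1
      obtain ⟨⟨hq2, hq2'⟩, _⟩ := hp2
      simp only at heq
      by_cases c1' : (pos (bk q1') - ii (ak q1)).val < off (ak q1) <;>
        by_cases c2' : (pos (bk q2') - ii (ak q2)).val < off (ak q2)
      · rw [if_pos c1', if_pos c2', Prod.mk.injEq] at heq
        obtain ⟨e1, e2⟩ := heq
        have h1 : q1 = q2 := by rw [← (ha q1 hq1).2, ← (ha q2 hq2).2, e1]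
        have h2 : q1' = q2' := by rw [← (hb q1' hq1').2, ← (hb q2' hq2').2, e2]
        rw [h1, h2]
      · rw [if_pos c1', if_neg c2', Prod.mk.injEq] at heq
        obtain ⟨e1, _⟩ := heq
        exact absurd (by rw [← (ha q1 hq1).1, e1, (hb q2' hq2').1]) hαβ
      · rw [if_neg c1', if_pos c2', Prod.mk.injEq] at heq
        obtain ⟨e1, _⟩ := heq
        exact absurd (by rw [← (ha q2 hq2).1, ← e1, (hb q1' hq1').1]) hαβ
      · rw [if_neg c1', if_neg c2', Prod.mk.injEq] at heq
        obtain ⟨e1, e2⟩ := heq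
        have h1 : q1' = q2' := by rw [← (hb q1' hq1').2, ← (hb q2' hq2').2, e1]
        have h2 : q1 = q2 := by rw [← (ha q1 hq1).2, ← (ha q2 hq2).2, e2]
        rw [h1, h2]
  have hsq : m ^ 2 = m * m := sq m
  omega

private lemma exists_equiv {n ℓ : ℕ} (i : Fin n → ZMod r) (a : Fin ℓ → ZMod r) (b : Fin ℓ → ℕ)
    (hmulti : Multiset.map i Finset.univ.val =
      Multiset.bind Finset.univ.val
        (fun j => Multiset.map (fun t => a j + (t : ZMod r)) (Multiset.range (b j)))) :
    ∃ e : Fin n ≃ (Σ j : Fin ℓ, Fin (b j)), ∀ x, a (e x).1 + (((e x).2 : ℕ) : ZMod r) = i x := by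
  classical
  simp only [Multiset.pure_def, Multiset.bind_def, Multiset.bind_singleton,
    Multiset.map_map, Function.comp] at hmulti
  set G : (Σ j : Fin ℓ, Fin (b j)) → ZMod r := fun s => a s.1 + ((s.2 : ℕ) : ZMod r) with hG
  have hcard : ∀ c : ZMod r,
      Fintype.card {x : Fin n // c = i x} =
      Fintype.card {s : Σ j : Fin ℓ, Fin (b j) // c = G s} := by
    intro c
    have hcount := congrArg (Multiset.count c) hmulti
    rw [Multiset.count_map, Multiset.count_bind] at hcount
    have lhs_eq : Fintype.card {x : Fin n // c = i x} =
        (Multiset.filter (fun x => c = i x) Finset.univ.val).card := by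
      rw [Fintype.card_subtype]
      rw [Finset.card, Finset.filter_val]
    have rhs_eq : Fintype.card {s : Σ j : Fin ℓ, Fin (b j) // c = G s} =
        (Finset.univ.val.map fun j => Multiset.count c
          (Multiset.map (fun t : ℕ => a j + (t : ZMod r)) (Multiset.range (b j)))).sum := by
      rw [Fintype.card_subtype]
      rw [← Finset.univ_sigma_univ]
      have hfs : (Finset.univ.sigma (fun _ => Finset.univ)).filter
            (fun s : Σ j : Fin ℓ, Fin (b j) => c = G s) =
          Finset.univ.sigma (fun j => Finset.univ.filter (fun t : Fin (b j) => c = G ⟨j, t⟩)) := by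
        ext ⟨j, t⟩
        simp [Finset.mem_sigma, Finset.mem_filter]
      rw [hfs, Finset.card_sigma]
      show _ = ∑ j, Multiset.count c _
      apply Finset.sum_congr rfl
      intro j _
      rw [Multiset.count_map]
      have hr1 : Multiset.range (b j) = (Finset.range (b j)).val := rfl
      rw [hr1]
      have hr2 : (Multiset.filter (fun t : ℕ => c = a j + (t : ZMod r))
            (Finset.range (b j)).val).card
          = ((Finset.range (b j)).filter (fun t : ℕ => c = a j + (t : ZMod r))).card := by
        rw [Finset.card, Finset.filter_val]
      rw [hr2]
      apply Finset.card_bij (fun (t : Fin (b j)) _ => (t : ℕ))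
      · intro t ht
        rw [Finset.mem_filter] at ht ⊢
        exact ⟨Finset.mem_range.mpr t.isLt, ht.2⟩
      · intro t1 _ t2 _ h
        exact Fin.ext h
      · intro t ht
        rw [Finset.mem_filter, Finset.mem_range] at ht
        exact ⟨⟨t, ht.1⟩, Finset.mem_filter.mpr ⟨Finset.mem_univ _, ht.2⟩, rfl⟩
    rw [lhs_eq, rhs_eq, ← hcount]
  let fib : ∀ c : ZMod r, {x : Fin n // i x = c} ≃ {s : Σ j : Fin ℓ, Fin (b j) // G s = c} :=
    fun c => (Equiv.subtypeEquivRight (fun x => eq_comm)).trans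
      ((Fintype.equivOfCardEq (hcard c)).trans (Equiv.subtypeEquivRight (fun s => eq_comm)))
  refine ⟨(Equiv.sigmaFiberEquiv i).symm.trans
    ((Equiv.sigmaCongrRight fib).trans (Equiv.sigmaFiberEquiv G)), ?_⟩
  intro x
  exact (fib (i x) ⟨x, rfl⟩).2

end helpers
/-- Lower bound on the cost of linear probing insertions.  A valid linear probing
placement of `n` keys with probe-sequence start positions `i j` is modelled by an
injective placement `pos`, displacements `off` with `pos j = i j + off j`, such that
every slot strictly preceding `pos j` in the probe sequence of key `j` is occupied.
If the multiset of start positions equals the multiset union of intervals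
`I_j = cycInterval r (a j) (b j)`, then the total number of insertion steps,
`Σ (off j + 1)`, is at least `Σ_{j₁ < j₂} |I_{j₁} ∩ I_{j₂}|² / 2`. -/
theorem stmt8 (r n ℓ : ℕ) (hr : 0 < r)
    (i : Fin n → ZMod r) (pos : Fin n → ZMod r) (off : Fin n → ℕ)
    (hposInj : Function.Injective pos)
    (hoff : ∀ j, pos j = i j + (off j : ZMod r))
    (hocc : ∀ j, ∀ t < off j, ∃ j', pos j' = i j + (t : ZMod r))
    (a : Fin ℓ → ZMod r) (b : Fin ℓ → ℕ)
    (hmulti : Multiset.map i Finset.univ.val =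
      Multiset.bind Finset.univ.val
        (fun j => Multiset.map (fun t => a j + (t : ZMod r)) (Multiset.range (b j)))) :
    ∑ j₁ : Fin ℓ, ∑ j₂ ∈ Finset.univ.filter (fun j₂ => j₁ < j₂),
        ((cycInterval r (a j₁) (b j₁) ∩ cycInterval r (a j₂) (b j₂)).card : ℝ) ^ 2 / 2
      ≤ ∑ j : Fin n, ((off j : ℝ) + 1) := by
  classical
  haveI : NeZero r := ⟨hr.ne'⟩
  -- total number of keys equals the total length of the intervals
  have hbsum : ∑ j, b j = n := by
    have hc := congrArg Multiset.card hmulti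
    simp only [Multiset.pure_def, Multiset.bind_def, Multiset.bind_singleton,
      Multiset.map_map, Function.comp, Multiset.card_map, Multiset.card_bind,
      Multiset.card_range] at hc
    simpa [Finset.sum] using hc.symm
  rcases Nat.eq_zero_or_pos n with hn0 | hn
  · -- no keys : all intervals are empty
    have hb0 : ∀ j, b j = 0 := by
      intro j
      have := Finset.sum_eq_zero_iff.mp (hbsum.trans hn0) j (Finset.mem_univ j)
      exact this
    have hint : ∀ j1 j2 : Fin ℓ,
        (cycInterval r (a j1) (b j1) ∩ cycInterval r (a j2) (b j2)).card = 0 := by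
      intro j1 j2
      simp [cycInterval, hb0]
    subst hn0
    simp [hint]
  -- main case
  obtain ⟨e, he⟩ := exists_equiv i a b hmulti
  set fam : Fin n → Fin ℓ := fun x => (e x).1 with hfam
  have hkey_ex : ∀ (j : Fin ℓ) (q : ZMod r), q ∈ cycInterval r (a j) (b j) →
      ∃ x, fam x = j ∧ i x = q := by
    intro j q hq
    rw [cycInterval, Finset.mem_image] at hq
    obtain ⟨t, ht, hq⟩ := hq
    rw [Finset.mem_range] at ht
    refine ⟨e.symm ⟨j, ⟨t, ht⟩⟩, ?_, ?_⟩
    · simp [hfam]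
    · have h2 := he (e.symm ⟨j, ⟨t, ht⟩⟩)
      rw [Equiv.apply_symm_apply] at h2
      rw [← h2]
      exact hq
  set key : Fin ℓ → ZMod r → Fin n :=
    fun j q => if h : ∃ x, fam x = j ∧ i x = q then h.choose else ⟨0, hn⟩ with hkeydef
  have hkey : ∀ (j : Fin ℓ) (q : ZMod r), q ∈ cycInterval r (a j) (b j) →
      fam (key j q) = j ∧ i (key j q) = q := by
    intro j q hq
    have hex := hkey_ex j q hq
    rw [hkeydef]
    simp only [dif_pos hex]
    exact hex.choose_spec
  have hnr : n ≤ r := by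
    have h1 := Fintype.card_le_of_injective pos hposInj
    rwa [Fintype.card_fin, ZMod.card] at h1
  have hpairb : ∀ j1 j2 : Fin ℓ, j1 ≠ j2 → b j1 + b j2 ≤ r := by
    intro j1 j2 hne
    have h1 : ({j1, j2} : Finset (Fin ℓ)).sum b ≤ ∑ j, b j :=
      Finset.sum_le_sum_of_subset (Finset.subset_univ _)
    rw [Finset.sum_pair hne] at h1
    omega
  set PassAll := Finset.univ.filter
    (fun w : Fin n × Fin n => (pos w.2 - i w.1).val < off w.1) with hPA
  set PassF : (Σ _ : Fin ℓ, Fin ℓ) → Finset (Fin n × Fin n) := fun π =>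
    Finset.univ.filter (fun w : Fin n × Fin n =>
      (pos w.2 - i w.1).val < off w.1 ∧
      ((fam w.1 = π.1 ∧ fam w.2 = π.2) ∨ (fam w.1 = π.2 ∧ fam w.2 = π.1))) with hPF
  set pairs : Finset (Σ _ : Fin ℓ, Fin ℓ) :=
    Finset.univ.sigma (fun j1 => Finset.univ.filter (fun j2 => j1 < j2)) with hpairs
  have hmempairs : ∀ π : (Σ _ : Fin ℓ, Fin ℓ), π ∈ pairs → π.1 < π.2 := by
    rintro ⟨j1, j2⟩ hπ
    rw [hpairs, Finset.mem_sigma, Finset.mem_filter] at hπ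
    exact hπ.2.2
  have hstep : ∀ π ∈ pairs,
      (cycInterval r (a π.1) (b π.1) ∩ cycInterval r (a π.2) (b π.2)).card ^ 2
        ≤ 2 * (PassF π).card := by
    rintro ⟨j1, j2⟩ hπ
    have hlt : j1 < j2 := hmempairs _ hπ
    have hne : j1 ≠ j2 := ne_of_lt hlt
    obtain ⟨s0, m, hmle, hSeq⟩ := arc_inter (a j1) (a j2) (b j1) (b j2) (hpairb _ _ hne)
    have hbj : b j1 ≤ r := by have := hpairb j1 j2 hne; omega
    have hm : m ≤ r := le_trans (le_trans hmle (min_le_left _ _)) hbj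
    dsimp only
    rw [hSeq, card_cycInterval hm]
    have hha : ∀ q ∈ cycInterval r s0 m, fam (key j1 q) = j1 ∧ i (key j1 q) = q := by
      intro q hq
      rw [← hSeq] at hq
      exact hkey j1 q (Finset.mem_of_mem_inter_left hq)
    have hhb : ∀ q ∈ cycInterval r s0 m, fam (key j2 q) = j2 ∧ i (key j2 q) = q := by
      intro q hq
      rw [← hSeq] at hq
      exact hkey j2 q (Finset.mem_of_mem_inter_right hq)
    exact perPair pos i off hposInj hoff fam j1 j2 hne s0 m hm (key j1) (key j2) hha hhb
  have hdisj : ∀ π1 ∈ pairs, ∀ π2 ∈ pairs, π1 ≠ π2 → Disjoint (PassF π1) (PassF π2) := by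
    rintro ⟨j1, j2⟩ h1 ⟨k1, k2⟩ h2 hne
    have hl1 : j1 < j2 := hmempairs _ h1
    have hl2 : k1 < k2 := hmempairs _ h2
    rw [Finset.disjoint_left]
    intro w hw1 hw2
    rw [hPF, Finset.mem_filter] at hw1 hw2
    apply hne
    obtain ⟨-, -, hc1⟩ := hw1
    obtain ⟨-, -, hc2⟩ := hw2
    dsimp only at hc1 hc2
    rcases hc1 with ⟨e1, e2⟩ | ⟨e1, e2⟩ <;> rcases hc2 with ⟨f1, f2⟩ | ⟨f1, f2⟩
    · rw [e1] at f1; rw [e2] at f2; rw [f1, f2]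
    · exfalso
      rw [e1] at f1; rw [e2] at f2
      exact absurd (hl1.trans (f2 ▸ (f1 ▸ hl2))) (lt_irrefl _)
    · exfalso
      rw [e1] at f1; rw [e2] at f2
      exact absurd (hl1.trans (f1 ▸ (f2 ▸ hl2))) (lt_irrefl _)
    · rw [e1] at f1; rw [e2] at f2; rw [f1, f2]
  have hsum1 : ∑ π ∈ pairs, (PassF π).card ≤ PassAll.card := by
    rw [← Finset.card_biUnion hdisj]
    apply Finset.card_le_card
    intro w hw
    rw [Finset.mem_biUnion] at hw
    obtain ⟨π, -, hw⟩ := hw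
    rw [hPF, Finset.mem_filter] at hw
    rw [hPA, Finset.mem_filter]
    exact ⟨hw.1, hw.2.1⟩
  have hsum2 : PassAll.card ≤ ∑ x, off x := by
    rw [Finset.card_eq_sum_card_fiberwise
      (f := fun w : Fin n × Fin n => w.1) (t := Finset.univ) (fun w _ => Finset.mem_univ _)]
    apply Finset.sum_le_sum
    intro x _
    have hcr : (Finset.range (off x)).card = off x := Finset.card_range _
    rw [← hcr]
    apply Finset.card_le_card_of_injOn (fun w => (pos w.2 - i x).val)
    · intro w hw
      rw [Finset.mem_coe, Finset.mem_filter] at hw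
      obtain ⟨hw1, hw2⟩ := hw
      rw [hPA, Finset.mem_filter] at hw1
      rw [Finset.mem_coe, Finset.mem_range, ← hw2]
      exact hw1.2
    · intro w hw w' hw' heq
      rw [Finset.mem_coe, Finset.mem_filter] at hw hw'
      have h2 : pos w.2 = pos w'.2 := val_sub_inj heq
      have h3 : w.2 = w'.2 := hposInj h2
      have h4 : w.1 = w'.1 := hw.2.trans hw'.2.symm
      exact Prod.ext h4 h3
  have hchain : ∑ π ∈ pairs, (PassF π).card ≤ ∑ x, off x := le_trans hsum1 hsum2
  calc ∑ j₁ : Fin ℓ, ∑ j₂ ∈ Finset.univ.filter (fun j₂ => j₁ < j₂),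
        ((cycInterval r (a j₁) (b j₁) ∩ cycInterval r (a j₂) (b j₂)).card : ℝ) ^ 2 / 2
      = ∑ π ∈ pairs,
        ((cycInterval r (a π.1) (b π.1) ∩ cycInterval r (a π.2) (b π.2)).card : ℝ) ^ 2 / 2 := by
        rw [hpairs, Finset.sum_sigma]
    _ ≤ ∑ π ∈ pairs, ((PassF π).card : ℝ) := by
        apply Finset.sum_le_sum
        intro π hπ
        have h1 := hstep π hπ
        have h2 : ((cycInterval r (a π.1) (b π.1) ∩ cycInterval r (a π.2) (b π.2)).card : ℝ) ^ 2
            ≤ 2 * ((PassF π).card : ℝ) := by exact_mod_cast h1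
        linarith
    _ = ((∑ π ∈ pairs, (PassF π).card : ℕ) : ℝ) := by push_cast; rfl
    _ ≤ ((∑ x, off x : ℕ) : ℝ) := Nat.cast_le.mpr hchain
    _ = ∑ x, ((off x : ℝ)) := by push_cast; rfl
    _ ≤ ∑ j : Fin n, ((off j : ℝ) + 1) := by
        apply Finset.sum_le_sum
        intro j _
        linarith
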